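/- Let h = (h_k)_{k∈ℤ} be a reduced homology theory on pointed CW complexes: each h_k is a functor to abelian groups sending pointed-homotopic maps to equal homomorphisms, and for every CW pair (X, A) there is an exact sequence h_k(A) → h_k(X) → h_k(X/A) → h_{k−1}(A) → h_{k−1}(X), natural in the pair, in which the maps h_k(A) → h_k(X) and h_{k−1}(A) → h_{k−1}(X) are induced by the inclusion A ⊆ X and the map h_k(X) → h_k(X/A) is induced by the quotient map. Suppose a pointed CW complex X has the 1-Step Stabilization property for h, i.e., for all k and all m ≥ 0 the kernel of h_k(X^{(m)}) → h_k(X^{(m+1)}) equals the kernel of h_k(X^{(m)}) → h_k(X) (maps induced by the skeleton inclusions). Then for every n, the quotient complex Y = X/X^{(n)} — with the CW structure whose m-skeleton is Y^{(m)} = X^{(m)}/X^{(n)} for m ≥ n — also has the 1-Step Stabilization property for h. -/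

import Mathlib

noncomputable section

/-! ## Pointed spaces and pointed maps -/

/-- A pointed topological space. -/
structure PtSp : Type 1 where
  /-- underlying type -/
  carrier : Type
  /-- topology -/
  [topInst : TopologicalSpace carrier]
  /-- basepoint -/
  pt : carrier

attribute [instance] PtSp.topInst

/-- A pointed continuous map. -/
@[ext] structure PtMap (X Y : PtSp) where
  toFun : X.carrier → Y.carrier
  continuous : Continuous toFun
  map_pt : toFun X.pt = Y.pt

/-- identity pointed map -/
def PtMap.id (X : PtSp) : PtMap X X := ⟨fun x => x, continuous_id, rfl⟩

/-- composition of pointed maps -/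
def PtMap.comp {X Y Z : PtSp} (g : PtMap Y Z) (f : PtMap X Y) : PtMap X Z :=
  ⟨g.toFun ∘ f.toFun, g.continuous.comp f.continuous, by
    simp [Function.comp, f.map_pt, g.map_pt]⟩

/-- constant pointed map -/
def PtMap.const (X Y : PtSp) : PtMap X Y := ⟨fun _ => Y.pt, continuous_const, rfl⟩

/-- underlying continuous map of a pointed map -/
def PtMap.toCM {X Y : PtSp} (f : PtMap X Y) : C(X.carrier, Y.carrier) := ⟨f.toFun, f.continuous⟩

/-- Pointed homotopy: homotopy relative to the basepoint. -/
def PtHomotopic {X Y : PtSp} (f g : PtMap X Y) : Prop :=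
  Nonempty (ContinuousMap.HomotopyRel f.toCM g.toCM {X.pt})

/-- Pointed homotopy equivalence of pointed spaces: pointed maps in both directions whose
composites are pointed-homotopic to the identities. -/
def PtHtpyEquiv (X Y : PtSp) : Prop :=
  ∃ (f : PtMap X Y) (g : PtMap Y X),
    PtHomotopic (g.comp f) (PtMap.id X) ∧ PtHomotopic (f.comp g) (PtMap.id Y)

/-! ## Wedge sums -/

/-- The relation generating the wedge: every basepoint is glued to an auxiliary point. -/
def wedgeRel {J : Type} (X : J → PtSp) :
    ((Σ j, (X j).carrier) ⊕ Unit) → ((Σ j, (X j).carrier) ⊕ Unit) → Prop :=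
  fun a b => (∃ j, a = Sum.inl ⟨j, (X j).pt⟩) ∧ b = Sum.inr ()

/-- The wedge sum `⋁ⱼ Xⱼ` of a family of pointed spaces: the quotient of the disjoint union
identifying all the basepoints (an auxiliary point is used so that this also makes sense for an
empty family, where the wedge is a single point). -/
def Wedge {J : Type} (X : J → PtSp) : PtSp where
  carrier := Quotient (Relation.EqvGen.setoid (wedgeRel X))
  pt := Quotient.mk _ (Sum.inr ())

/-- inclusion of a wedge summand -/
def wedgeIncl {J : Type} (X : J → PtSp) (j : J) : PtMap (X j) (Wedge X) where
  toFun x := Quotient.mk _ (Sum.inl ⟨j, x⟩)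
  continuous := continuous_quotient_mk'.comp (continuous_inl.comp continuous_sigmaMk)
  map_pt := Quotient.sound (Relation.EqvGen.rel _ _ ⟨⟨j, rfl⟩, rfl⟩)

/-- The map collapsing all wedge summands but the `i`-th one to the basepoint
(for a constant family). -/
def wedgeProj {J : Type} [DecidableEq J] (Y : PtSp) (i : J) :
    PtMap (Wedge (fun _ : J => Y)) Y where
  toFun := Quotient.lift
    (fun a => Sum.elim (fun p : Σ _ : J, Y.carrier => if p.1 = i then p.2 else Y.pt)
      (fun _ => Y.pt) a)
    (by
      intro a b h
      induction h with
      | rel a b hab =>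
        obtain ⟨⟨j, ha⟩, hb⟩ := hab
        subst ha; subst hb
        by_cases h : j = i <;> simp [h]
      | refl a => rfl
      | symm _ _ _ ih => exact ih.symm
      | trans _ _ _ _ _ ih₁ ih₂ => exact ih₁.trans ih₂)
  continuous := by
    apply Continuous.quotient_lift
    apply Continuous.sumElim _ continuous_const
    apply continuous_sigma
    intro j
    by_cases h : j = i <;> simp [h] <;> [exact continuous_id; exact continuous_const]
  map_pt := rfl

/-! ## Smash products, spheres, suspensions -/

/-- The relation generating the smash product. -/
def smashRel (X Y : PtSp) : (X.carrier × Y.carrier) → (X.carrier × Y.carrier) → Prop :=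
  fun a b => (a.1 = X.pt ∨ a.2 = Y.pt) ∧ b = (X.pt, Y.pt)

/-- The smash product `X ∧ Y = (X × Y)/(X ∨ Y)`. -/
def Smash (X Y : PtSp) : PtSp where
  carrier := Quotient (Relation.EqvGen.setoid (smashRel X Y))
  pt := Quotient.mk _ (X.pt, Y.pt)

/-- The smash product of two pointed maps. -/
def SmashMap {X X' Y Y' : PtSp} (f : PtMap X X') (g : PtMap Y Y') :
    PtMap (Smash X Y) (Smash X' Y') where
  toFun := Quotient.lift
    (fun p => (Quotient.mk _ (f.toFun p.1, g.toFun p.2) : (Smash X' Y').carrier))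
    (by
      intro a b h
      induction h with
      | rel a b hab =>
        obtain ⟨h1, h2⟩ := hab
        subst h2
        refine Quotient.sound (Relation.EqvGen.rel _ _ ⟨?_, by simp [f.map_pt, g.map_pt]⟩)
        rcases h1 with h1 | h1
        · exact Or.inl (by rw [h1, f.map_pt])
        · exact Or.inr (by rw [h1, g.map_pt])
      | refl a => rfl
      | symm _ _ _ ih => exact ih.symm
      | trans _ _ _ _ _ ih₁ ih₂ => exact ih₁.trans ih₂)
  continuous := by
    apply Continuous.quotient_lift
    exact continuous_quotient_mk'.comp
      ((f.continuous.comp continuous_fst).prodMk (g.continuous.comp continuous_snd))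
  map_pt := by
    show (Quotient.mk _ (f.toFun X.pt, g.toFun Y.pt) : (Smash X' Y').carrier) = _
    rw [f.map_pt, g.map_pt]; rfl

/-- The `n`-sphere, pointed. -/
def PtSphere (n : ℕ) : PtSp where
  carrier := Metric.sphere (0 : EuclideanSpace ℝ (Fin (n + 1))) 1
  pt := ⟨EuclideanSpace.single 0 1, by simp⟩

/-- The reduced suspension `ΣX = S¹ ∧ X`. -/
def Susp (X : PtSp) : PtSp := Smash (PtSphere 1) X

/-- suspension of a pointed map -/
def SuspMap {X Y : PtSp} (f : PtMap X Y) : PtMap (Susp X) (Susp Y) :=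
  SmashMap (PtMap.id (PtSphere 1)) f

/-- iterated reduced suspension -/
def SuspIter : ℕ → PtSp → PtSp
  | 0, X => X
  | n + 1, X => Susp (SuspIter n X)

/-- iterated suspension of a pointed map -/
def SuspIterMap {X Y : PtSp} : (ℓ : ℕ) → PtMap X Y → PtMap (SuspIter ℓ X) (SuspIter ℓ Y)
  | 0, f => f
  | n + 1, f => SuspMap (SuspIterMap n f)

/-- product of pointed spaces -/
def PtProd (X Y : PtSp) : PtSp where
  carrier := X.carrier × Y.carrier
  pt := (X.pt, Y.pt)

open Metric in
/-- A CW structure on a topological space `X`, in the classical sense (Hatcher, Appendix):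
a Hausdorff space together with characteristic maps from closed disks whose open cells
partition `X`, such that the boundary of each `n`-cell lies in finitely many cells of
dimension `< n`, and `X` carries the weak topology determined by the characteristic maps. -/
structure CWStruct (X : Type) [TopologicalSpace X] : Type 1 where
  /-- `X` is Hausdorff -/
  t2 : T2Space X
  /-- the index types of the `n`-cells -/
  cell : ℕ → Type
  /-- the characteristic map of each `n`-cell, defined on the closed unit disk `Dⁿ` -/
  char : ∀ n, cell n → C((closedBall (0 : EuclideanSpace ℝ (Fin n)) 1 :
    Set (EuclideanSpace ℝ (Fin n))), X)
  /-- each characteristic map is injective on the open disk -/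
  injOn : ∀ n (i : cell n), Set.InjOn (char n i) (Subtype.val ⁻¹' ball 0 1)
  /-- the open cells partition `X`: every point lies in exactly one open cell -/
  partition : ∀ x : X, ∃! p : Σ n, cell n,
    x ∈ char p.1 p.2 '' (Subtype.val ⁻¹' ball (0 : EuclideanSpace ℝ (Fin p.1)) 1)
  /-- the image of the boundary sphere of an `n`-cell is contained in the union of
  finitely many open cells of dimension `< n` -/
  boundary : ∀ n (i : cell n), ∃ F : Finset (Σ m, cell m), (∀ p ∈ F, p.1 < n) ∧
    char n i '' (Subtype.val ⁻¹' sphere (0 : EuclideanSpace ℝ (Fin n)) 1) ⊆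
      ⋃ p ∈ F, char p.1 p.2 '' (Subtype.val ⁻¹' ball (0 : EuclideanSpace ℝ (Fin p.1)) 1)
  /-- `X` has the weak topology: a set is closed as soon as its preimage under every
  characteristic map is closed -/
  weak : ∀ A : Set X, (∀ n (i : cell n), IsClosed (char n i ⁻¹' A)) → IsClosed A

variable {X : Type} [TopologicalSpace X]

/-- The `m`-skeleton `X^{(m)}` of a CW structure: the union of the (closed) cells of
dimension `≤ m`. -/
def CWStruct.sk (c : CWStruct X) (m : ℕ) : Set X :=
  ⋃ (n : ℕ) (_ : n ≤ m) (i : c.cell n), Set.range (c.char n i)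

lemma CWStruct.sk_mono (c : CWStruct X) {m m' : ℕ} (h : m ≤ m') : c.sk m ⊆ c.sk m' := by
  intro x hx
  simp only [CWStruct.sk, Set.mem_iUnion] at hx ⊢
  obtain ⟨n, hn, i, hi⟩ := hx
  exact ⟨n, hn.trans h, i, hi⟩

/-- A CW complex is finite if it has finitely many cells. -/
def CWStruct.IsFinite (c : CWStruct X) : Prop := Finite (Σ n, c.cell n)

/-- A subcomplex of a CW complex: a union of open cells which contains the closure of
each of its cells. -/
def CWStruct.IsSubcomplex (c : CWStruct X) (A : Set X) : Prop :=
  ∃ S : Set (Σ n, c.cell n),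
    A = (⋃ p ∈ S, c.char p.1 p.2 '' (Subtype.val ⁻¹' Metric.ball 0 1)) ∧
    ∀ p ∈ S, Set.range (c.char p.1 p.2) ⊆ A

/-! ## Pointed skeleta of a pointed CW complex -/

/-- The `m`-skeleton of a pointed CW complex, as a pointed space (the basepoint being a
`0`-cell, it lies in every skeleton). -/
def skPt (X : PtSp) (c : CWStruct X.carrier) (m : ℕ) (h : X.pt ∈ c.sk 0) : PtSp :=
  ⟨↥(c.sk m), ⟨X.pt, c.sk_mono (Nat.zero_le m) h⟩⟩

/-- The inclusion `X^{(m)} → X^{(m+1)}` of skeleta, as a pointed map. -/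
def skPtIncl (X : PtSp) (c : CWStruct X.carrier) (m : ℕ) (h : X.pt ∈ c.sk 0) :
    PtMap (skPt X c m h) (skPt X c (m + 1) h) :=
  ⟨Set.inclusion (c.sk_mono (Nat.le_succ m)), continuous_inclusion _, rfl⟩

/-- The inclusion `X^{(m)} → X` of a skeleton into the whole complex, as a pointed map. -/
def skPtToAll (X : PtSp) (c : CWStruct X.carrier) (m : ℕ) (h : X.pt ∈ c.sk 0) :
    PtMap (skPt X c m h) X :=
  ⟨Subtype.val, continuous_subtype_val, rfl⟩

/-! ## Pointed subspaces and quotients -/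

/-- A subset of a pointed space containing the basepoint, as a pointed space. -/
def ptSub (X : PtSp) (A : Set X.carrier) (h : X.pt ∈ A) : PtSp := ⟨↥A, ⟨X.pt, h⟩⟩

/-- The inclusion of a pointed subspace. -/
def ptSubIncl (X : PtSp) (A : Set X.carrier) (h : X.pt ∈ A) : PtMap (ptSub X A h) X :=
  ⟨Subtype.val, continuous_subtype_val, rfl⟩

/-- The quotient `X/A` collapsing `A ⊆ X` to a point, pointed at the image of the
basepoint. -/
def quotPt (X : PtSp) (A : Set X.carrier) : PtSp :=
  ⟨Quotient (Relation.EqvGen.setoid fun a b => a ∈ A ∧ b = X.pt), Quotient.mk _ X.pt⟩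

/-- The quotient map `X → X/A`. -/
def quotPtMk (X : PtSp) (A : Set X.carrier) : PtMap X (quotPt X A) :=
  ⟨Quotient.mk _, continuous_quotient_mk', rfl⟩

/-- The pointed map `X/A → X'/A'` induced by a map of pairs `f : (X, A) → (X', A')`. -/
def quotPtMap {X X' : PtSp} (f : PtMap X X') (A : Set X.carrier) (A' : Set X'.carrier)
    (hf : Set.MapsTo f.toFun A A') : PtMap (quotPt X A) (quotPt X' A') where
  toFun := Quotient.lift (fun x => (Quotient.mk _ (f.toFun x) : (quotPt X' A').carrier))
    (by
      intro a b hab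
      induction hab with
      | rel a b hr =>
        exact Quotient.sound (Relation.EqvGen.rel _ _ ⟨hf hr.1, by rw [hr.2, f.map_pt]⟩)
      | refl a => rfl
      | symm _ _ _ ih => exact ih.symm
      | trans _ _ _ _ _ ih1 ih2 => exact ih1.trans ih2)
  continuous := Continuous.quotient_lift (continuous_quotient_mk'.comp f.continuous) _
  map_pt := by
    show (Quotient.mk _ (f.toFun X.pt) : (quotPt X' A').carrier) = _
    rw [f.map_pt]; rfl

/-- The restriction `A → A'` of a map of pairs `f : (X, A) → (X', A')`. -/
def ptSubMap {X X' : PtSp} (f : PtMap X X') (A : Set X.carrier) (A' : Set X'.carrier)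
    (hf : Set.MapsTo f.toFun A A') (h : X.pt ∈ A) (h' : X'.pt ∈ A') :
    PtMap (ptSub X A h) (ptSub X' A' h') :=
  ⟨fun x => ⟨f.toFun x.1, hf x.2⟩,
    (f.continuous.comp continuous_subtype_val).subtype_mk _,
    Subtype.ext f.map_pt⟩

/-! ## Reduced homology theories on pointed CW complexes -/

/-- A reduced homology theory `(h_k)_{k ∈ ℤ}` on pointed CW complexes: a sequence of
functors to abelian groups sending pointed-homotopic maps to equal homomorphisms, together
with, for every CW pair `(X, A)` (a pointed CW complex `X` with a pointed subcomplex `A`),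
a boundary map `∂ : h_k(X/A) → h_{k-1}(A)` making the sequence
`h_k(A) → h_k(X) → h_k(X/A) → h_{k-1}(A) → h_{k-1}(X)` exact — where the first and last
maps are induced by the inclusion `A ⊆ X` and the middle map by the quotient map
`X → X/A` — naturally in the pair. -/
structure RedHomology where
  /-- the groups `h_k(X)` -/
  obj : ℤ → PtSp → AddCommGrpCat.{0}
  /-- the induced homomorphisms -/
  map : ∀ (k : ℤ) {A B : PtSp}, PtMap A B → (↥(obj k A) →+ ↥(obj k B))
  map_id : ∀ (k : ℤ) (A : PtSp), map k (PtMap.id A) = AddMonoidHom.id ↥(obj k A)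
  map_comp : ∀ (k : ℤ) {A B C : PtSp} (f : PtMap A B) (g : PtMap B C),
    map k (g.comp f) = (map k g).comp (map k f)
  htpy_inv : ∀ (k : ℤ) {A B : PtSp} (f g : PtMap A B), PtHomotopic f g → map k f = map k g
  /-- the boundary maps of CW pairs -/
  bd : ∀ (k : ℤ) (X : PtSp) (c : CWStruct X.carrier) (A : Set X.carrier),
    c.IsSubcomplex A → ∀ _ : X.pt ∈ A,
    ↥(obj k (quotPt X A)) →+ ↥(obj (k - 1) (ptSub X A ‹X.pt ∈ A›))
  exact_incl_quot : ∀ (k : ℤ) (X : PtSp) (c : CWStruct X.carrier) (A : Set X.carrier)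
    (hA : c.IsSubcomplex A) (hpt : X.pt ∈ A),
    Function.Exact (map k (ptSubIncl X A hpt)) (map k (quotPtMk X A))
  exact_quot_bd : ∀ (k : ℤ) (X : PtSp) (c : CWStruct X.carrier) (A : Set X.carrier)
    (hA : c.IsSubcomplex A) (hpt : X.pt ∈ A),
    Function.Exact (map k (quotPtMk X A)) (bd k X c A hA hpt)
  exact_bd_incl : ∀ (k : ℤ) (X : PtSp) (c : CWStruct X.carrier) (A : Set X.carrier)
    (hA : c.IsSubcomplex A) (hpt : X.pt ∈ A),
    Function.Exact (bd k X c A hA hpt) (map (k - 1) (ptSubIncl X A hpt))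
  /-- naturality of the boundary map in maps of CW pairs -/
  bd_natural : ∀ (k : ℤ) (X X' : PtSp) (c : CWStruct X.carrier) (c' : CWStruct X'.carrier)
    (A : Set X.carrier) (A' : Set X'.carrier) (hA : c.IsSubcomplex A)
    (hA' : c'.IsSubcomplex A') (hpt : X.pt ∈ A) (hpt' : X'.pt ∈ A')
    (f : PtMap X X') (hf : Set.MapsTo f.toFun A A'),
    (bd k X' c' A' hA' hpt').comp (map k (quotPtMap f A A' hf)) =
      (map (k - 1) (ptSubMap f A A' hf hpt hpt')).comp (bd k X c A hA hpt)

/-! ## Auxiliary CW lemmas -/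

namespace CWStruct

open Metric

variable {X : Type} [TopologicalSpace X] (c : CWStruct X)

/-- the open cell of index `p` -/
def opc (p : Σ n, c.cell n) : Set X :=
  c.char p.1 p.2 '' (Subtype.val ⁻¹' ball (0 : EuclideanSpace ℝ (Fin p.1)) 1)

lemma opc_disjoint {p q : Σ n, c.cell n} {x : X} (hp : x ∈ c.opc p) (hq : x ∈ c.opc q) :
    p = q := by
  obtain ⟨r, -, hu⟩ := c.partition x
  exact (hu p hp).trans (hu q hq).symm

lemma range_subset_opc (j : ℕ) (i : c.cell j) :
    Set.range (c.char j i) ⊆ ⋃ (p : Σ n, c.cell n) (_ : p.1 ≤ j), c.opc p := by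
  rintro x ⟨y, rfl⟩
  by_cases hy : (y : EuclideanSpace ℝ (Fin j)) ∈ ball (0 : EuclideanSpace ℝ (Fin j)) 1
  · exact Set.mem_iUnion₂.2 ⟨⟨j, i⟩, le_rfl, Set.mem_image_of_mem _ hy⟩
  · have hys : (y : EuclideanSpace ℝ (Fin j)) ∈ sphere (0 : EuclideanSpace ℝ (Fin j)) 1 := by
      have := y.2
      simp only [mem_closedBall, mem_ball] at this hy
      simpa [mem_sphere] using le_antisymm this (not_lt.1 hy)
    obtain ⟨F, hF1, hF2⟩ := c.boundary j i
    have := hF2 (Set.mem_image_of_mem _ hys)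
    simp only [Set.mem_iUnion] at this
    obtain ⟨p, hpF, hx⟩ := this
    exact Set.mem_iUnion₂.2 ⟨p, (hF1 p hpF).le, hx⟩

lemma sk_subset_opc (m : ℕ) :
    c.sk m ⊆ ⋃ (p : Σ n, c.cell n) (_ : p.1 ≤ m), c.opc p := by
  intro x hx
  simp only [sk, Set.mem_iUnion] at hx
  obtain ⟨j, hj, i, hi⟩ := hx
  have := c.range_subset_opc j i hi
  simp only [Set.mem_iUnion] at this ⊢
  obtain ⟨p, hp, hx⟩ := this
  exact ⟨p, hp.trans hj, hx⟩

lemma opc_subset_sk {p : Σ n, c.cell n} {m : ℕ} (hp : p.1 ≤ m) : c.opc p ⊆ c.sk m := by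
  refine (Set.image_subset_range _ _).trans ?_
  intro x hx
  simp only [sk, Set.mem_iUnion]
  exact ⟨p.1, hp, p.2, hx⟩

lemma range_char_subset_sk {j : ℕ} {m : ℕ} (hj : j ≤ m) (i : c.cell j) :
    Set.range (c.char j i) ⊆ c.sk m := by
  intro x hx
  simp only [sk, Set.mem_iUnion]
  exact ⟨j, hj, i, hx⟩

lemma isSubcomplex_sk (n : ℕ) : c.IsSubcomplex (c.sk n) := by
  refine ⟨{p | p.1 ≤ n}, ?_, fun p hp => c.range_char_subset_sk hp p.2⟩
  apply le_antisymm
  · intro x hx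
    have := c.sk_subset_opc n hx
    simp only [Set.mem_iUnion] at this ⊢
    obtain ⟨p, hp, hx⟩ := this
    exact ⟨p, hp, hx⟩
  · intro x hx
    simp only [Set.mem_iUnion] at hx
    obtain ⟨p, hp, hx⟩ := hx
    exact c.opc_subset_sk hp hx

end CWStruct
namespace CWStruct

open Metric

variable {X : Type} [TopologicalSpace X] (c : CWStruct X)

/-- cells of the `m`-skeleton -/
def cellSk (m j : ℕ) : Type := { _i : c.cell j // j ≤ m }

/-- characteristic maps of the `m`-skeleton -/
def charSk (m j : ℕ) (i : c.cellSk m j) :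
    C((closedBall (0 : EuclideanSpace ℝ (Fin j)) 1 : Set (EuclideanSpace ℝ (Fin j))),
      ↥(c.sk m)) :=
  ⟨fun y => ⟨c.char j i.1 y, c.range_char_subset_sk i.2 i.1 (Set.mem_range_self y)⟩,
    ((c.char j i.1).continuous).subtype_mk _⟩

lemma mem_image_charSk {m j : ℕ} (i : c.cellSk m j) (S : Set (EuclideanSpace ℝ (Fin j)))
    (x : ↥(c.sk m)) :
    x ∈ c.charSk m j i '' (Subtype.val ⁻¹' S) ↔ (x : X) ∈ c.char j i.1 '' (Subtype.val ⁻¹' S) := by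
  constructor
  · rintro ⟨y, hy, rfl⟩; exact ⟨y, hy, rfl⟩
  · rintro ⟨y, hy, hxy⟩; exact ⟨y, hy, Subtype.ext hxy⟩

/-- The CW structure on the `m`-skeleton of a CW complex. -/
def cwSk (m : ℕ) : CWStruct ↥(c.sk m) where
  t2 := by haveI := c.t2; infer_instance
  cell := c.cellSk m
  char := c.charSk m
  injOn := by
    intro j i x hx y hy hxy
    exact c.injOn j i.1 hx hy (congrArg Subtype.val hxy)
  partition := by
    intro x
    obtain ⟨p, hple, hx⟩ : ∃ p : Σ n, c.cell n, p.1 ≤ m ∧ (x : X) ∈ c.opc p := by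
      have := c.sk_subset_opc m x.2
      simp only [Set.mem_iUnion] at this
      obtain ⟨p, hp, hx⟩ := this
      exact ⟨p, hp, hx⟩
    refine ⟨⟨p.1, ⟨p.2, hple⟩⟩, (c.mem_image_charSk _ _ _).2 hx, ?_⟩
    rintro ⟨j, i⟩ hj
    have hx' : (x : X) ∈ c.opc ⟨j, i.1⟩ := (c.mem_image_charSk _ _ _).1 hj
    have hpq : (⟨j, i.1⟩ : Σ n, c.cell n) = p := c.opc_disjoint hx' hx
    obtain ⟨n, pi⟩ := p
    obtain ⟨h1, h2⟩ := Sigma.mk.inj_iff.1 hpq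
    subst h1
    cases i
    cases eq_of_heq h2
    rfl
  boundary := by
    classical
    rintro j ⟨i, hj⟩
    obtain ⟨F, hF1, hF2⟩ := c.boundary j i
    refine ⟨F.attach.image (fun q =>
      (⟨q.1.1, ⟨q.1.2, ((hF1 q.1 q.2).le.trans hj)⟩⟩ : Σ j', c.cellSk m j')), ?_, ?_⟩
    · intro p hp
      simp only [Finset.mem_image, Finset.mem_attach, true_and] at hp
      obtain ⟨q, hq⟩ := hp
      rw [← hq]
      exact hF1 q.1 q.2
    · intro x hx
      have hx' : (x : X) ∈ c.char j i '' (Subtype.val ⁻¹' sphere 0 1) :=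
        (c.mem_image_charSk _ _ _).1 hx
      have := hF2 hx'
      simp only [Set.mem_iUnion] at this ⊢
      obtain ⟨p, hpF, hxp⟩ := this
      refine ⟨⟨p.1, ⟨p.2, ((hF1 p hpF).le.trans hj)⟩⟩, ?_, (c.mem_image_charSk _ _ _).2 hxp⟩
      simp only [Finset.mem_image, Finset.mem_attach, true_and]
      exact ⟨⟨p, hpF⟩, rfl⟩
  weak := by
    intro A hA
    haveI := c.t2
    set S : Set X := Subtype.val '' A with hS
    have hSsk : S ⊆ c.sk m := by rintro x ⟨a, ha, rfl⟩; exact a.2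
    have key : ∀ j, ∀ i : c.cell j, IsClosed (c.char j i ⁻¹' S) := by
      intro j
      induction j using Nat.strong_induction_on with
      | _ j IH =>
        intro i
        by_cases hj : j ≤ m
        · have : c.char j i ⁻¹' S = c.charSk m j ⟨i, hj⟩ ⁻¹' A := by
            ext y
            simp only [Set.mem_preimage, hS]
            constructor
            · rintro ⟨a, ha, hay⟩
              have : a = c.charSk m j ⟨i, hj⟩ y := Subtype.ext hay
              rwa [← this]
            · intro ha
              exact ⟨_, ha, rfl⟩
          rw [this]
          exact hA j ⟨i, hj⟩
        · push_neg at hj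
          obtain ⟨F, hF1, hF2⟩ := c.boundary j i
          set B : Set X := ⋃ p ∈ F, c.char p.1 p.2 '' (c.char p.1 p.2 ⁻¹' S) with hB
          have hBS : B ⊆ S := by
            simp only [hB, Set.iUnion_subset_iff]
            rintro p hp x ⟨y, hy, rfl⟩
            exact hy
          have hBclosed : IsClosed B := by
            apply Set.Finite.isClosed_biUnion F.finite_toSet
            intro p hp
            apply IsCompact.isClosed
            apply IsCompact.image _ (c.char p.1 p.2).continuous
            have : CompactSpace (closedBall (0 : EuclideanSpace ℝ (Fin p.1)) 1 :
                Set (EuclideanSpace ℝ (Fin p.1))) :=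
              isCompact_iff_compactSpace.1 (isCompact_closedBall _ _)
            exact (IH p.1 (hF1 p hp) p.2).isCompact
          have heq : c.char j i ⁻¹' S =
              c.char j i ⁻¹' B ∩ (Subtype.val ⁻¹' sphere (0 : EuclideanSpace ℝ (Fin j)) 1) := by
            ext y
            simp only [Set.mem_preimage, Set.mem_inter_iff]
            constructor
            · intro hy
              have hys : (y : EuclideanSpace ℝ (Fin j)) ∈ sphere (0 : EuclideanSpace ℝ (Fin j)) 1 := by
                by_contra hball
                have hyb : (y : EuclideanSpace ℝ (Fin j)) ∈ ball (0 : EuclideanSpace ℝ (Fin j)) 1 := by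
                  have := y.2
                  simp only [mem_closedBall, mem_ball] at this ⊢
                  rcases lt_or_eq_of_le this with h | h
                  · exact h
                  · exact absurd (by simpa [mem_sphere] using h) hball
                have h1 : c.char j i y ∈ c.opc ⟨j, i⟩ := Set.mem_image_of_mem _ hyb
                have h2 := c.sk_subset_opc m (hSsk hy)
                simp only [Set.mem_iUnion] at h2
                obtain ⟨q, hq, hq2⟩ := h2
                have := c.opc_disjoint h1 hq2
                rw [← this] at hq
                exact absurd hq (not_le.2 hj)
              refine ⟨?_, hys⟩
              have := hF2 (Set.mem_image_of_mem _ hys)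
              simp only [Set.mem_iUnion] at this
              obtain ⟨p, hpF, hxp⟩ := this
              obtain ⟨z, _, hz⟩ := hxp
              simp only [hB, Set.mem_iUnion]
              exact ⟨p, hpF, z, by rw [Set.mem_preimage, hz]; exact hy, hz⟩
            · rintro ⟨hyB, -⟩
              exact hBS hyB
          rw [heq]
          exact IsClosed.inter (hBclosed.preimage (c.char j i).continuous)
            (isClosed_sphere.preimage continuous_subtype_val)
    have hSclosed : IsClosed S := c.weak S key
    have : A = Subtype.val ⁻¹' S := by
      rw [hS, Set.preimage_image_eq A Subtype.val_injective]
    rw [this]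
    exact hSclosed.preimage continuous_subtype_val

lemma isSubcomplex_skSk {n m : ℕ} (hnm : n ≤ m) :
    (c.cwSk m).IsSubcomplex (Subtype.val ⁻¹' c.sk n : Set ↥(c.sk m)) := by
  refine ⟨{p | p.1 ≤ n}, ?_, ?_⟩
  · apply le_antisymm
    · intro x hx
      have := c.sk_subset_opc n hx
      simp only [Set.mem_iUnion] at this ⊢
      obtain ⟨p, hp, hxp⟩ := this
      exact ⟨⟨p.1, ⟨p.2, hp.trans hnm⟩⟩, hp, (c.mem_image_charSk _ _ _).2 hxp⟩
    · intro x hx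
      simp only [Set.mem_iUnion] at hx
      obtain ⟨p, hp, hxp⟩ := hx
      have : (x : X) ∈ c.opc ⟨p.1, p.2.1⟩ := (c.mem_image_charSk _ _ _).1 hxp
      exact c.opc_subset_sk hp this
  · rintro p hp x ⟨y, rfl⟩
    show ((c.cwSk m).char p.1 p.2 y : X) ∈ c.sk n
    exact c.range_char_subset_sk hp p.2.1 (Set.mem_range_self y)

end CWStruct
/-! ## PtMap algebra lemmas -/

lemma quotPtMap_comp {X Y Z : PtSp} (f : PtMap X Y) (g : PtMap Y Z)
    (A : Set X.carrier) (B : Set Y.carrier) (C : Set Z.carrier)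
    (hf : Set.MapsTo f.toFun A B) (hg : Set.MapsTo g.toFun B C)
    (hgf : Set.MapsTo (g.comp f).toFun A C) :
    quotPtMap (g.comp f) A C hgf =
      (quotPtMap g B C hg).comp (quotPtMap f A B hf) := by
  apply PtMap.ext
  funext x
  induction x using Quotient.ind
  rfl

lemma quotPtMap_mk {X Y : PtSp} (f : PtMap X Y) (A : Set X.carrier) (B : Set Y.carrier)
    (hf : Set.MapsTo f.toFun A B) :
    (quotPtMap f A B hf).comp (quotPtMk X A) = (quotPtMk Y B).comp f := by
  apply PtMap.ext
  funext x
  rfl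

/-- the canonical identification of `X^{(n)}` with its copy inside `X^{(m)}` -/
def skSubInv (X : PtSp) (c : CWStruct X.carrier) {n m : ℕ} (hnm : n ≤ m)
    (hpt : X.pt ∈ c.sk 0) (hptX : X.pt ∈ c.sk n)
    (hptm : (skPt X c m hpt).pt ∈ (Subtype.val ⁻¹' c.sk n : Set (skPt X c m hpt).carrier)) :
    PtMap (ptSub X (c.sk n) hptX) (ptSub (skPt X c m hpt) (Subtype.val ⁻¹' c.sk n) hptm) :=
  ⟨fun x => ⟨⟨x.1, c.sk_mono hnm x.2⟩, x.2⟩,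
    (continuous_subtype_val.subtype_mk _).subtype_mk _,
    Subtype.ext (Subtype.ext rfl)⟩

lemma skSubInv_right (X : PtSp) (c : CWStruct X.carrier) {n m : ℕ} (hnm : n ≤ m)
    (hpt : X.pt ∈ c.sk 0) (hptX : X.pt ∈ c.sk n)
    (hptm : (skPt X c m hpt).pt ∈ (Subtype.val ⁻¹' c.sk n : Set (skPt X c m hpt).carrier)) :
    (ptSubMap (skPtToAll X c m hpt) (Subtype.val ⁻¹' c.sk n) (c.sk n)
        (fun _ hx => hx) hptm hptX).comp (skSubInv X c hnm hpt hptX hptm) =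
      PtMap.id _ := by
  apply PtMap.ext; funext x; exact Subtype.ext rfl

lemma skSubInv_left (X : PtSp) (c : CWStruct X.carrier) {n m : ℕ} (hnm : n ≤ m)
    (hpt : X.pt ∈ c.sk 0) (hptX : X.pt ∈ c.sk n)
    (hptm : (skPt X c m hpt).pt ∈ (Subtype.val ⁻¹' c.sk n : Set (skPt X c m hpt).carrier)) :
    (skSubInv X c hnm hpt hptX hptm).comp (ptSubMap (skPtToAll X c m hpt)
        (Subtype.val ⁻¹' c.sk n) (c.sk n) (fun _ hx => hx) hptm hptX) =
      PtMap.id _ := by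
  apply PtMap.ext; funext x; exact Subtype.ext (Subtype.ext rfl)
/-- Let `h` be a reduced homology theory on pointed CW complexes.
Suppose a pointed CW complex `X` has the 1-Step Stabilization property for `h`: for all
`k` and `m` the kernel of `h_k(X^{(m)}) → h_k(X^{(m+1)})` equals the kernel of
`h_k(X^{(m)}) → h_k(X)` (maps induced by the skeleton inclusions).  Then for every `n` the
quotient complex `Y = X/X^{(n)}` — whose `m`-skeleton for `m ≥ n` is
`Y^{(m)} = X^{(m)}/X^{(n)}` — also has the 1-Step Stabilization property for `h`: for all
`k` and all `m ≥ n`, the kernel of `h_k(Y^{(m)}) → h_k(Y^{(m+1)})` (induced by the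
inclusion of skeleta) equals the kernel of `h_k(Y^{(m)}) → h_k(Y)`. -/
theorem oneStep_quotient (h : RedHomology) (X : PtSp) (c : CWStruct X.carrier)
    (hpt : X.pt ∈ c.sk 0)
    (hyp : ∀ (k : ℤ) (m : ℕ),
      AddMonoidHom.ker (h.map k (skPtIncl X c m hpt)) =
      AddMonoidHom.ker (h.map k (skPtToAll X c m hpt)))
    (n : ℕ) :
    ∀ (k : ℤ) (m : ℕ), n ≤ m →
      AddMonoidHom.ker (h.map k (quotPtMap (skPtIncl X c m hpt)
          (Subtype.val ⁻¹' c.sk n) (Subtype.val ⁻¹' c.sk n) fun _ hx => hx)) =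
      AddMonoidHom.ker (h.map k (quotPtMap (skPtToAll X c m hpt)
          (Subtype.val ⁻¹' c.sk n) (c.sk n) fun _ hx => hx)) := by
  intro k m hnm
  have hptX : X.pt ∈ c.sk n := c.sk_mono (Nat.zero_le n) hpt
  have hptm : (skPt X c m hpt).pt ∈
      (Subtype.val ⁻¹' c.sk n : Set (skPt X c m hpt).carrier) := hptX
  have hptm1 : (skPt X c (m + 1) hpt).pt ∈
      (Subtype.val ⁻¹' c.sk n : Set (skPt X c (m + 1) hpt).carrier) := hptX
  have hAm := c.isSubcomplex_skSk hnm
  have hAm1 := c.isSubcomplex_skSk (hnm.trans (Nat.le_succ m))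
  have hsubX := c.isSubcomplex_sk n
  have rinj : ∀ k' : ℤ, Function.Injective (h.map k' (ptSubMap (skPtToAll X c m hpt)
      (Subtype.val ⁻¹' c.sk n) (c.sk n) (fun _ hx => hx) hptm hptX)) := by
    intro k' a b hab
    have := congrArg (h.map k' (skSubInv X c hnm hpt hptX hptm)) hab
    rw [← AddMonoidHom.comp_apply, ← AddMonoidHom.comp_apply, ← h.map_comp,
      skSubInv_left, h.map_id] at this
    exact this
  ext x
  simp only [AddMonoidHom.mem_ker]
  constructor
  · -- easy direction
    intro hx
    have hdec : quotPtMap (skPtToAll X c m hpt) (Subtype.val ⁻¹' c.sk n) (c.sk n)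
          (fun _ hx => hx) =
        (quotPtMap (skPtToAll X c (m + 1) hpt) (Subtype.val ⁻¹' c.sk n) (c.sk n)
          (fun _ hx => hx)).comp
        (quotPtMap (skPtIncl X c m hpt) (Subtype.val ⁻¹' c.sk n) (Subtype.val ⁻¹' c.sk n)
          (fun _ hx => hx)) := by
      apply PtMap.ext
      funext z
      induction z using Quotient.ind
      rfl
    rw [hdec, h.map_comp, AddMonoidHom.comp_apply, hx, map_zero]
  · -- hard direction
    intro hx
    -- Step 1: the boundary of x vanishes
    have hnat := h.bd_natural k (skPt X c m hpt) X (c.cwSk m) c (Subtype.val ⁻¹' c.sk n)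
      (c.sk n) hAm hsubX hptm hptX (skPtToAll X c m hpt) (fun _ hx => hx)
    have h1 : h.bd k (skPt X c m hpt) (c.cwSk m) (Subtype.val ⁻¹' c.sk n) hAm hptm x = 0 := by
      apply rinj (k - 1)
      have hh := congrArg (fun φ => φ x) hnat
      simp only [AddMonoidHom.comp_apply] at hh
      rw [← hh, hx, map_zero, map_zero]
    -- Step 2: x comes from h_k(X^{(m)})
    obtain ⟨y, hy⟩ := (h.exact_quot_bd k (skPt X c m hpt) (c.cwSk m)
      (Subtype.val ⁻¹' c.sk n) hAm hptm x).1 h1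
    -- Step 3: the image of y in h_k(X) dies in h_k(X/X^{(n)})
    have h3 : h.map k (quotPtMk X (c.sk n)) (h.map k (skPtToAll X c m hpt) y) = 0 := by
      rw [← AddMonoidHom.comp_apply, ← h.map_comp,
        ← quotPtMap_mk (skPtToAll X c m hpt) (Subtype.val ⁻¹' c.sk n) (c.sk n)
          (fun _ hx => hx),
        h.map_comp, AddMonoidHom.comp_apply, hy, hx]
    -- Step 4: hence it comes from h_k(X^{(n)})
    obtain ⟨a, ha⟩ := (h.exact_incl_quot k X c (c.sk n) hsubX hptX _).1 h3
    -- Step 5: pull a back to the copy of X^{(n)} inside X^{(m)}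
    set a₀ := h.map k (skSubInv X c hnm hpt hptX hptm) a with ha₀
    have h5 : h.map k (skPtToAll X c m hpt)
        (h.map k (ptSubIncl (skPt X c m hpt) (Subtype.val ⁻¹' c.sk n) hptm) a₀) =
        h.map k (skPtToAll X c m hpt) y := by
      have hcomm : (skPtToAll X c m hpt).comp
          (ptSubIncl (skPt X c m hpt) (Subtype.val ⁻¹' c.sk n) hptm) =
          (ptSubIncl X (c.sk n) hptX).comp (ptSubMap (skPtToAll X c m hpt)
            (Subtype.val ⁻¹' c.sk n) (c.sk n) (fun _ hx => hx) hptm hptX) := by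
        apply PtMap.ext; funext z; rfl
      rw [← AddMonoidHom.comp_apply, ← h.map_comp, hcomm, h.map_comp,
        AddMonoidHom.comp_apply, ha₀, ← AddMonoidHom.comp_apply
          (h.map k (ptSubMap (skPtToAll X c m hpt) (Subtype.val ⁻¹' c.sk n) (c.sk n)
            (fun _ hx => hx) hptm hptX)),
        ← h.map_comp, skSubInv_right, h.map_id, AddMonoidHom.id_apply, ha]
    -- Step 6: apply the 1-step stabilization hypothesis for X
    have h6 : h.map k (skPtIncl X c m hpt)
        (y - h.map k (ptSubIncl (skPt X c m hpt) (Subtype.val ⁻¹' c.sk n) hptm) a₀) = 0 := by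
      have hmem : y - h.map k (ptSubIncl (skPt X c m hpt) (Subtype.val ⁻¹' c.sk n) hptm) a₀ ∈
          AddMonoidHom.ker (h.map k (skPtToAll X c m hpt)) := by
        rw [AddMonoidHom.mem_ker, map_sub, h5, sub_self]
      rw [← hyp k m] at hmem
      exact hmem
    have h7 : h.map k (skPtIncl X c m hpt) y = h.map k (skPtIncl X c m hpt)
        (h.map k (ptSubIncl (skPt X c m hpt) (Subtype.val ⁻¹' c.sk n) hptm) a₀) := by
      rw [map_sub, sub_eq_zero] at h6
      exact h6
    -- Step 7: conclude
    have hmk : h.map k (quotPtMap (skPtIncl X c m hpt) (Subtype.val ⁻¹' c.sk n)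
          (Subtype.val ⁻¹' c.sk n) (fun _ hx => hx)) x =
        h.map k (quotPtMk (skPt X c (m + 1) hpt) (Subtype.val ⁻¹' c.sk n))
          (h.map k (skPtIncl X c m hpt) y) := by
      rw [← hy, ← AddMonoidHom.comp_apply, ← h.map_comp,
        quotPtMap_mk (skPtIncl X c m hpt) (Subtype.val ⁻¹' c.sk n) (Subtype.val ⁻¹' c.sk n)
          (fun _ hx => hx),
        h.map_comp, AddMonoidHom.comp_apply]
    rw [hmk, h7]
    have hfact : (skPtIncl X c m hpt).comp
        (ptSubIncl (skPt X c m hpt) (Subtype.val ⁻¹' c.sk n) hptm) =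
        (ptSubIncl (skPt X c (m + 1) hpt) (Subtype.val ⁻¹' c.sk n) hptm1).comp
          (ptSubMap (skPtIncl X c m hpt) (Subtype.val ⁻¹' c.sk n) (Subtype.val ⁻¹' c.sk n)
            (fun _ hx => hx) hptm hptm1) := by
      apply PtMap.ext; funext z; rfl
    have hstep : h.map k (skPtIncl X c m hpt)
        (h.map k (ptSubIncl (skPt X c m hpt) (Subtype.val ⁻¹' c.sk n) hptm) a₀) =
        h.map k (ptSubIncl (skPt X c (m + 1) hpt) (Subtype.val ⁻¹' c.sk n) hptm1)
          (h.map k (ptSubMap (skPtIncl X c m hpt) (Subtype.val ⁻¹' c.sk n)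
            (Subtype.val ⁻¹' c.sk n) (fun _ hx => hx) hptm hptm1) a₀) := by
      rw [← AddMonoidHom.comp_apply, ← h.map_comp, hfact, h.map_comp,
        AddMonoidHom.comp_apply]
    rw [hstep]
    exact (h.exact_incl_quot k (skPt X c (m + 1) hpt) (c.cwSk (m + 1))
      (Subtype.val ⁻¹' c.sk n) hAm1 hptm1).apply_apply_eq_zero _
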